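/- There exists an entire function f : ℂ → ℂ which is not a polynomial such that for every algebraic number α ∈ ℂ and every natural number s ≥ 0, the value f^(s)(α) lies in ℚ(i), i.e., f^(s)(α) = p + q·i for some rational numbers p and q. -/

import Mathlib

open Polynomial Filter Finset Metric

noncomputable section

namespace Stmt12Aux

/-- enumeration of algebraic numbers -/
def e : ℕ ≃ {x : ℂ | IsAlgebraic ℚ x} := by
  haveI := (Algebraic.countable ℚ ℂ).to_subtype
  haveI := (Algebraic.infinite_of_charZero ℚ ℂ).to_subtype
  haveI : Encodable {x : ℂ | IsAlgebraic ℚ x} := Encodable.ofCountable _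
  haveI : Denumerable {x : ℂ | IsAlgebraic ℚ x} := Denumerable.ofEncodableOfInfinite _
  exact (Denumerable.eqv _).symm

def a (n : ℕ) : ℂ := (e n : ℂ)

lemma a_inj : Function.Injective a := fun m n h => e.injective (Subtype.ext h)

lemma a_surj (x : ℂ) (hx : IsAlgebraic ℚ x) : ∃ n, a n = x :=
  ⟨e.symm ⟨x, hx⟩, by simp only [a, Equiv.apply_symm_apply]⟩

def sk (k : ℕ) : ℕ := k.unpair.1
def al (k : ℕ) : ℂ := a k.unpair.2

lemma sk_pair (s m : ℕ) : sk (Nat.pair s m) = s := by simp [sk]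
lemma al_pair (s m : ℕ) : al (Nat.pair s m) = a m := by simp [al]

lemma order {j k : ℕ} (hjk : j < k) (h : al j = al k) : sk j < sk k := by
  have hm : j.unpair.2 = k.unpair.2 := a_inj h
  by_contra hs
  push_neg at hs
  rcases lt_or_eq_of_le hs with h1 | h1
  · have h2 := Nat.pair_lt_pair_left j.unpair.2 h1
    simp only [sk] at h2
    rw [hm, Nat.pair_unpair] at h2
    rw [← hm, Nat.pair_unpair] at h2
    omega
  · have h4 : j.unpair = k.unpair := Prod.ext h1.symm hm
    have h5 : j = k := by
      have h3 := Nat.pair_unpair j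
      rw [h4, Nat.pair_unpair] at h3
      exact h3.symm
    omega


/-- the interpolation basis polynomials -/
def H (k : ℕ) : Polynomial ℂ :=
  (X - C (al k)) ^ (sk k) *
    ∏ i ∈ (range k).filter (fun i => al i ≠ al k), (X - C (al i)) ^ (sk i + 1)

lemma eval_iter_deriv_zero (b : ℂ) (m n : ℕ) (u : Polynomial ℂ) (h : n < m) :
    eval b (derivative^[n] ((X - C b) ^ m * u)) = 0 := by
  rw [Polynomial.iterate_derivative_mul, eval_finset_sum]
  apply Finset.sum_eq_zero
  intro k hk
  have hk' : k ≤ n := by simpa using Nat.lt_succ_iff.mp (Finset.mem_range.mp hk)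
  have h2 : n - k < m := lt_of_le_of_lt (Nat.sub_le n k) h
  rw [Polynomial.iterate_derivative_X_sub_pow]
  simp [eval_smul, eval_mul, eval_pow, sub_self, zero_pow (show m - (n-k) ≠ 0 by omega)]

lemma eval_iter_deriv_self (b : ℂ) (m : ℕ) (u : Polynomial ℂ) :
    eval b (derivative^[m] ((X - C b) ^ m * u)) = (m.factorial : ℂ) * eval b u := by
  rw [Polynomial.iterate_derivative_mul, eval_finset_sum]
  rw [Finset.sum_eq_single 0]
  · simp [Polynomial.iterate_derivative_X_sub_pow_self]
  · intro k hk hk0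
    have hk' : k ≤ m := Nat.lt_succ_iff.mp (Finset.mem_range.mp hk)
    rw [Polynomial.iterate_derivative_X_sub_pow]
    have h3 : m - (m - k) = k := by omega
    simp [eval_smul, eval_mul, eval_pow, sub_self, h3, zero_pow hk0]
  · intro h; exact absurd (Finset.mem_range.mpr (Nat.succ_pos m)) h

def val (j k : ℕ) : ℂ := eval (al k) (derivative^[sk k] (H j))

lemma val_eq_zero {k j : ℕ} (h : k < j) : val j k = 0 := by
  unfold val H
  by_cases hne : al k = al j
  · have hs := order h hne
    simp only [← hne]
    exact eval_iter_deriv_zero _ _ _ _ hs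
  · have hk : k ∈ (range j).filter (fun i => al i ≠ al j) := by
      simp [Finset.mem_filter, Finset.mem_range, h, hne]
    rw [← Finset.mul_prod_erase _ _ hk, mul_left_comm]
    exact eval_iter_deriv_zero _ _ _ _ (Nat.lt_succ_self _)

lemma val_self_ne (k : ℕ) : val k k ≠ 0 := by
  unfold val H
  rw [eval_iter_deriv_self]
  apply mul_ne_zero
  · exact_mod_cast Nat.factorial_ne_zero (sk k)
  · rw [eval_prod]
    apply Finset.prod_ne_zero_iff.mpr
    intro i hi
    rw [Finset.mem_filter] at hi
    simp only [eval_pow, eval_sub, eval_X, eval_C]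
    exact pow_ne_zero _ (sub_ne_zero_of_ne (Ne.symm hi.2))

lemma exists_bound (k : ℕ) :
    ∃ Cb : ℝ, 0 ≤ Cb ∧ ∀ z : ℂ, ‖z‖ ≤ (k : ℝ) → ‖eval z (H k)‖ ≤ Cb := by
  obtain ⟨C, hC⟩ := (isCompact_closedBall (0:ℂ) k).exists_bound_of_continuousOn
    ((H k).continuous.continuousOn)
  refine ⟨max C 0, le_max_right _ _, fun z hz => ?_⟩
  exact le_trans (hC z (mem_closedBall_zero_iff.mpr hz)) (le_max_left _ _)

def M (k : ℕ) : ℝ := (exists_bound k).choose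

lemma M_nonneg (k : ℕ) : 0 ≤ M k := (exists_bound k).choose_spec.1

lemma M_bound (k : ℕ) {z : ℂ} (hz : ‖z‖ ≤ (k : ℝ)) : ‖eval z (H k)‖ ≤ M k :=
  (exists_bound k).choose_spec.2 z hz

def eps (k : ℕ) : ℝ := (1/2 : ℝ)^k / (1 + M k)

lemma eps_pos (k : ℕ) : 0 < eps k :=
  div_pos (pow_pos (by norm_num) _) (by linarith [M_nonneg k])

lemma eps_mul_M_le (k : ℕ) : eps k * M k ≤ (1/2 : ℝ)^k := by
  have h1 : (0:ℝ) < 1 + M k := by linarith [M_nonneg k]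
  have : eps k * M k = (1/2:ℝ)^k * (M k / (1 + M k)) := by rw [eps]; ring
  rw [this]
  calc (1/2:ℝ)^k * (M k / (1 + M k)) ≤ (1/2:ℝ)^k * 1 := by
        apply mul_le_mul_of_nonneg_left _ (le_of_lt (pow_pos (by norm_num) k))
        rw [div_le_one h1]; linarith [M_nonneg k]
    _ = (1/2:ℝ)^k := mul_one _

lemma exists_pick (k : ℕ) (w : ℂ) :
    ∃ t : ℂ, (∃ p q : ℚ, t = (p : ℂ) + (q : ℂ) * Complex.I) ∧ t ≠ 0 ∧
      ‖t - w‖ ≤ eps k * ‖val k k‖ := by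
  set δ : ℝ := eps k * ‖val k k‖ with hδdef
  have hδ : 0 < δ := mul_pos (eps_pos k) (norm_pos_iff.mpr (val_self_ne k))
  obtain ⟨p, hp⟩ := exists_rat_near w.re (by positivity : (0:ℝ) < δ/2)
  obtain ⟨q1, hq1a, hq1b⟩ := exists_rat_btwn (show w.im < w.im + δ/2 by linarith)
  obtain ⟨q2, hq2a, hq2b⟩ := exists_rat_btwn (show w.im < (q1:ℝ) from hq1a)
  set q : ℚ := if q1 = 0 then q2 else q1 with hqdef
  have hq0 : q ≠ 0 := by
    by_cases h1 : q1 = 0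
    · simp only [hqdef, if_pos h1]
      intro h2
      rw [h1, h2] at hq2b
      exact absurd hq2b (by norm_num)
    · simpa only [hqdef, if_neg h1] using h1
  have hqlo : w.im < (q : ℝ) := by
    by_cases h1 : q1 = 0 <;> simp only [hqdef, if_pos, if_neg, h1] <;> first | exact hq2a | exact hq1a
  have hqhi : (q : ℝ) < w.im + δ/2 := by
    by_cases h1 : q1 = 0
    · simp only [hqdef, if_pos h1]; linarith
    · simp only [hqdef, if_neg h1]; exact hq1b
  refine ⟨(p : ℂ) + (q : ℂ) * Complex.I, ⟨p, q, rfl⟩, ?_, ?_⟩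
  · intro h
    have him : ((p : ℂ) + (q : ℂ) * Complex.I).im = 0 := by rw [h]; simp
    simp only [Complex.add_im, Complex.ratCast_im, Complex.mul_I_im, Complex.ratCast_re,
      zero_add] at him
    exact hq0 (by exact_mod_cast him)
  · have hre : ((p : ℂ) + (q : ℂ) * Complex.I - w).re = (p : ℝ) - w.re := by simp
    have him : ((p : ℂ) + (q : ℂ) * Complex.I - w).im = (q : ℝ) - w.im := by simp
    have h1 := Complex.norm_le_abs_re_add_abs_im ((p : ℂ) + (q : ℂ) * Complex.I - w)
    rw [hre, him] at h1
    have h2 : |(p : ℝ) - w.re| < δ/2 := by rw [abs_sub_comm]; exact hp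
    have h3 : |(q : ℝ) - w.im| < δ/2 := by rw [abs_of_pos (by linarith)]; linarith
    linarith

/-- the target values in ℚ(i) -/
def pick (k : ℕ) (w : ℂ) : ℂ := (exists_pick k w).choose

def c : ℕ → ℂ
  | k =>
    let w : ℂ := ∑ j ∈ (Finset.range k).attach, c j.1 * val j.1 k
    (pick k w - w) / val k k
  decreasing_by exact Finset.mem_range.mp j.2

def w (k : ℕ) : ℂ := ∑ j ∈ Finset.range k, c j * val j k

def t (k : ℕ) : ℂ := pick k (w k)

lemma c_spec (k : ℕ) : c k = (t k - w k) / val k k := by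
  rw [c]
  simp only [Finset.sum_attach (Finset.range k) (fun j => c j * val j k)]
  rfl

lemma t_qi (k : ℕ) : ∃ p q : ℚ, t k = (p : ℂ) + (q : ℂ) * Complex.I :=
  (exists_pick k (w k)).choose_spec.1

lemma t_ne (k : ℕ) : t k ≠ 0 := (exists_pick k (w k)).choose_spec.2.1

lemma c_norm (k : ℕ) : ‖c k‖ ≤ eps k := by
  rw [c_spec, norm_div]
  rw [div_le_iff₀ (norm_pos_iff.mpr (val_self_ne k))]
  exact (exists_pick k (w k)).choose_spec.2.2

lemma sum_val (k : ℕ) {N : ℕ} (hN : k < N) :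
    ∑ j ∈ Finset.range N, c j * val j k = t k := by
  have h1 : ∑ j ∈ Finset.range N, c j * val j k = ∑ j ∈ Finset.range (k+1), c j * val j k := by
    symm
    apply Finset.sum_subset (Finset.range_subset_range.mpr hN)
    intro j _ hj
    rw [Finset.mem_range, not_lt] at hj
    rw [val_eq_zero (by omega : k < j), mul_zero]
  rw [h1, Finset.sum_range_succ, c_spec, div_mul_cancel₀ _ (val_self_ne k)]
  show w k + (t k - w k) = t k
  ring

def F : ℂ → ℂ := fun z => ∑' k, c k * eval z (H k)

def PN (N : ℕ) : Polynomial ℂ := ∑ j ∈ Finset.range N, C (c j) * H j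

lemma FN_eq (N : ℕ) : (fun z => ∑ j ∈ Finset.range N, c j * eval z (H j))
    = fun z => eval z (PN N) := by
  funext z
  rw [PN, eval_finset_sum]
  exact Finset.sum_congr rfl (fun j _ => by rw [eval_mul, eval_C])

lemma term_bound (n : ℕ) : ∀ᶠ j in cofinite, ∀ x ∈ closedBall (0:ℂ) (n:ℝ),
    ‖c j * eval x (H j)‖ ≤ (1/2 : ℝ)^j := by
  rw [Nat.cofinite_eq_atTop]
  filter_upwards [eventually_ge_atTop n] with j hj x hx
  rw [norm_mul]
  have h1 : ‖eval x (H j)‖ ≤ M j := by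
    apply M_bound
    have := mem_closedBall_zero_iff.mp hx
    calc ‖x‖ ≤ (n:ℝ) := this
      _ ≤ (j:ℝ) := by exact_mod_cast hj
  calc ‖c j‖ * ‖eval x (H j)‖ ≤ eps j * M j :=
        mul_le_mul (c_norm j) h1 (norm_nonneg _) (le_of_lt (eps_pos j))
    _ ≤ (1/2:ℝ)^j := eps_mul_M_le j

lemma tendsto_ball (n : ℕ) :
    TendstoUniformlyOn (fun N z => ∑ j ∈ Finset.range N, c j * eval z (H j)) F atTop
      (closedBall (0:ℂ) (n:ℝ)) := by
  have hsum : Summable (fun j : ℕ => (1/2 : ℝ)^j) :=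
    summable_geometric_of_lt_one (by norm_num) (by norm_num)
  have h := tendstoUniformlyOn_tsum_of_cofinite_eventually hsum (term_bound n)
  exact fun v hv => tendsto_finset_range.eventually (h v hv)

lemma TLU0 : TendstoLocallyUniformlyOn (fun N z => eval z (PN N)) F atTop Set.univ := by
  rw [tendstoLocallyUniformlyOn_iff_forall_isCompact isOpen_univ]
  intro K _ hK
  obtain ⟨r, hr⟩ := hK.isBounded.subset_closedBall 0
  have hKn : K ⊆ closedBall (0:ℂ) ((⌈r⌉₊ : ℕ) : ℝ) :=
    hr.trans (closedBall_subset_closedBall (by exact_mod_cast Nat.le_ceil r))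
  have := (tendsto_ball ⌈r⌉₊).mono hKn
  convert this using 2
  rw [← FN_eq]

lemma iter_deriv_PN (s N : ℕ) :
    derivative^[s] (PN N) = ∑ j ∈ Finset.range N, C (c j) * derivative^[s] (H j) := by
  induction s with
  | zero => rfl
  | succ n ih =>
    rw [Function.iterate_succ_apply', ih, derivative_sum]
    exact Finset.sum_congr rfl (fun j _ => by
      rw [Polynomial.derivative_C_mul, Function.iterate_succ_apply'])

lemma TLU_iter (s : ℕ) :
    TendstoLocallyUniformlyOn (fun N z => eval z (derivative^[s] (PN N)))
      (iteratedDeriv s F) atTop Set.univ := by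
  induction s with
  | zero => simpa [iteratedDeriv_zero] using TLU0
  | succ n ih =>
    have h := ih.deriv (Eventually.of_forall fun N =>
      (Polynomial.differentiable _).differentiableOn) isOpen_univ
    rw [iteratedDeriv_succ]
    convert h using 2 with N
    funext z
    show eval z (derivative^[n+1] (PN N)) = deriv (fun z => eval z (derivative^[n] (PN N))) z
    rw [Polynomial.deriv, Function.iterate_succ_apply']

lemma iter_deriv_F (k : ℕ) : iteratedDeriv (sk k) F (al k) = t k := by
  have h1 : Tendsto (fun N => eval (al k) (derivative^[sk k] (PN N))) atTop
      (nhds (iteratedDeriv (sk k) F (al k))) :=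
    (TLU_iter (sk k)).tendsto_at (Set.mem_univ _)
  have h2 : ∀ N, k < N → eval (al k) (derivative^[sk k] (PN N)) = t k := by
    intro N hN
    rw [iter_deriv_PN, eval_finset_sum]
    rw [← sum_val k hN]
    exact Finset.sum_congr rfl (fun j _ => by rw [eval_mul, eval_C]; rfl)
  have h3 : Tendsto (fun _ : ℕ => t k) atTop (nhds (iteratedDeriv (sk k) F (al k))) := by
    apply h1.congr'
    filter_upwards [eventually_gt_atTop k] with N hN
    exact h2 N hN
  exact tendsto_nhds_unique h3 tendsto_const_nhds

lemma F_diff : Differentiable ℂ F := by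
  rw [← differentiableOn_univ]
  exact TLU0.differentiableOn (Eventually.of_forall fun N =>
    (Polynomial.differentiable _).differentiableOn) isOpen_univ

lemma iteratedDeriv_poly (p : Polynomial ℂ) (s : ℕ) :
    iteratedDeriv s (fun z => eval z p) = fun z => eval z (derivative^[s] p) := by
  induction s with
  | zero => simp [iteratedDeriv_zero]
  | succ n ih =>
    rw [iteratedDeriv_succ, ih]
    funext z
    rw [Polynomial.deriv, Function.iterate_succ_apply']

lemma F_not_poly (p : Polynomial ℂ) : F ≠ fun z => eval z p := by
  intro hFp
  obtain ⟨m0, hm0⟩ := a_surj 0 isAlgebraic_zero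
  set k : ℕ := Nat.pair (p.natDegree + 1) m0 with hk
  have h1 : iteratedDeriv (sk k) F (al k) = t k := iter_deriv_F k
  have hsk : sk k = p.natDegree + 1 := by rw [hk, sk_pair]
  rw [hFp, iteratedDeriv_poly, hsk,
    Polynomial.iterate_derivative_eq_zero (Nat.lt_succ_self _)] at h1
  simp at h1
  exact t_ne k h1.symm

end Stmt12Aux

end

theorem stmt_12 :
    ∃ f : ℂ → ℂ, Differentiable ℂ f ∧
      (∀ p : Polynomial ℂ, f ≠ fun z => p.eval z) ∧
      ∀ α : ℂ, IsAlgebraic ℚ α → ∀ s : ℕ,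
        ∃ p q : ℚ, iteratedDeriv s f α = (p : ℂ) + (q : ℂ) * Complex.I := by
  refine ⟨Stmt12Aux.F, Stmt12Aux.F_diff, Stmt12Aux.F_not_poly, ?_⟩
  intro α hα s
  obtain ⟨m, hm⟩ := Stmt12Aux.a_surj α hα
  have h1 := Stmt12Aux.iter_deriv_F (Nat.pair s m)
  rw [Stmt12Aux.sk_pair, Stmt12Aux.al_pair, hm] at h1
  obtain ⟨p, q, hpq⟩ := Stmt12Aux.t_qi (Nat.pair s m)
  exact ⟨p, q, by rw [h1, hpq]⟩
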